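/- Let T > 0, let B : ℝ → ℝ be continuous, and let D > 0. If z : [0, T] → ℝ is continuous on [0, T], differentiable at every t ∈ [0, T] with z′(t) = B(t)·z(t) + z(t)², and satisfies z(T) = D, then for every t ∈ [0, T], z(t) = D · ( exp(∫_t^T B(s) ds) + D·∫_t^T exp(∫_t^s B(r) dr) ds )^{−1}. In particular the terminal value problem for the Riccati equation has a unique solution on [0, T]. -/

import Mathlib

open Set intervalIntegral

/-- Uniqueness for the Riccati terminal value problem: if `z` is continuous on
`[0, T]`, differentiable at every `t ∈ [0, T]` with `z' = B(t)·z + z²`, and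
`z(T) = D > 0`, then `z` coincides on `[0, T]` with the closed-form solution
`t ↦ D·(exp(∫_t^T B) + D·∫_t^T exp(∫_t^s B) ds)⁻¹`. -/
theorem riccati_closed_form_unique (T : ℝ) (hT : 0 < T) (B : ℝ → ℝ)
    (hB : Continuous B) (D : ℝ) (hD : 0 < D) (z : ℝ → ℝ)
    (hzc : ContinuousOn z (Icc (0 : ℝ) T))
    (hz : ∀ t ∈ Icc (0 : ℝ) T, HasDerivAt z (B t * z t + (z t) ^ 2) t)
    (hzT : z T = D) :
    ∀ t ∈ Icc (0 : ℝ) T,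
      z t = D * (Real.exp (∫ s in t..T, B s)
          + D * ∫ s in t..T, Real.exp (∫ r in t..s, B r))⁻¹ := by
  set E : ℝ → ℝ := fun t => Real.exp (∫ s in (0:ℝ)..t, B s) with hE
  have hEpos : ∀ t, 0 < E t := fun t => Real.exp_pos _
  have hEderiv : ∀ t : ℝ, HasDerivAt E (B t * E t) t := by
    intro t
    have h1 : HasDerivAt (fun u => ∫ s in (0:ℝ)..u, B s) (B t) t :=
      (hB.integral_hasStrictDerivAt 0 t).hasDerivAt
    simpa [hE, mul_comm] using h1.exp
  have hEcont : Continuous E := by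
    rw [continuous_iff_continuousAt]; exact fun t => (hEderiv t).continuousAt
  set G : ℝ → ℝ := fun t => E T + D * ∫ s in t..T, E s with hG
  have hGpos : ∀ t ∈ Icc (0:ℝ) T, 0 < G t := by
    intro t ht
    have h0 : 0 ≤ ∫ s in t..T, E s :=
      intervalIntegral.integral_nonneg ht.2 fun s _ => (hEpos s).le
    have := hEpos T
    simp only [hG]
    nlinarith
  have hGderiv : ∀ t : ℝ, HasDerivAt G (-(D * E t)) t := by
    intro t
    have h1 : HasStrictDerivAt (fun u => ∫ s in u..T, E s) (-E t) t :=
      intervalIntegral.integral_hasStrictDerivAt_left (hEcont.intervalIntegrable t T)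
        (hEcont.stronglyMeasurableAtFilter _ _) hEcont.continuousAt
    have h2 : HasDerivAt (fun u => E T + D * ∫ s in u..T, E s) (D * (-E t)) t :=
      (((h1.hasDerivAt).const_mul D).const_add (E T))
    simpa [hG, mul_comm, mul_neg] using h2
  set y : ℝ → ℝ := fun t => D * E t / G t with hy
  have hyderiv : ∀ t ∈ Icc (0:ℝ) T, HasDerivAt y (B t * y t + (y t) ^ 2) t := by
    intro t ht
    have hGne : G t ≠ 0 := (hGpos t ht).ne'
    have h1 : HasDerivAt (fun u => D * E u) (D * (B t * E t)) t := (hEderiv t).const_mul D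
    have h2 := h1.div (hGderiv t) hGne
    convert h2 using 1
    case e'_4 => rfl
    case e'_5 => rfl
    case e'_8 => rfl
    simp only [hy]
    field_simp
    ring
  have hyT : y T = D := by
    simp [hy, hG, intervalIntegral.integral_same, (hEpos T).ne']
  -- continuous extension of B + z + y to all of ℝ
  have hycont : ContinuousOn y (Icc (0:ℝ) T) := fun t ht =>
    ((hyderiv t ht).continuousAt).continuousWithinAt
  set zext : ℝ → ℝ := IccExtend hT.le ((Icc (0:ℝ) T).restrict z) with hzext
  set yext : ℝ → ℝ := IccExtend hT.le ((Icc (0:ℝ) T).restrict y) with hyext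
  have hzextc : Continuous zext := (hzc.restrict).Icc_extend'
  have hyextc : Continuous yext := (hycont.restrict).Icc_extend'
  have hzexteq : ∀ t ∈ Icc (0:ℝ) T, zext t = z t := fun t ht => by
    simp [hzext, IccExtend_of_mem hT.le _ ht]; rfl
  have hyexteq : ∀ t ∈ Icc (0:ℝ) T, yext t = y t := fun t ht => by
    simp [hyext, IccExtend_of_mem hT.le _ ht]; rfl
  set c : ℝ → ℝ := fun t => B t + zext t + yext t with hc
  have hccont : Continuous c := by fun_prop
  set μ : ℝ → ℝ := fun t => Real.exp (-(∫ s in (0:ℝ)..t, c s)) with hμ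
  have hμpos : ∀ t, 0 < μ t := fun t => Real.exp_pos _
  have hμderiv : ∀ t : ℝ, HasDerivAt μ (-c t * μ t) t := by
    intro t
    have h1 : HasDerivAt (fun u => -(∫ s in (0:ℝ)..u, c s)) (-c t) t :=
      ((hccont.integral_hasStrictDerivAt 0 t).hasDerivAt).neg
    simpa [hμ, mul_comm] using h1.exp
  set g : ℝ → ℝ := fun t => (z t - y t) * μ t with hg
  have hgderiv : ∀ t ∈ Icc (0:ℝ) T, HasDerivAt g 0 t := by
    intro t ht
    have h1 := ((hz t ht).sub (hyderiv t ht)).mul (hμderiv t)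
    have hcEq : c t = B t + z t + y t := by
      simp [hc, hzexteq t ht, hyexteq t ht]
    convert h1 using 1
    case e'_4 => rfl
    case e'_5 => rfl
    case e'_8 => rfl
    rw [hcEq, Pi.sub_apply]; ring
  have hgcont : ContinuousOn g (Icc (0:ℝ) T) := fun t ht =>
    ((hgderiv t ht).continuousAt).continuousWithinAt
  have hgconst : ∀ t ∈ Icc (0:ℝ) T, g t = g 0 :=
    constant_of_has_deriv_right_zero hgcont fun x hx =>
      ((hgderiv x (Ico_subset_Icc_self hx)).hasDerivWithinAt)
  have hgT : g T = 0 := by simp [hg, hzT, hyT]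
  have hzy : ∀ t ∈ Icc (0:ℝ) T, z t = y t := by
    intro t ht
    have h0 : g t = g 0 := hgconst t ht
    have hT0 : g T = g 0 := hgconst T (right_mem_Icc.2 hT.le)
    have : g t = 0 := by rw [h0, ← hT0, hgT]
    have := mul_eq_zero.1 this
    rcases this with h | h
    · exact sub_eq_zero.1 h
    · exact absurd h (hμpos t).ne'
  -- identify y with the stated closed form
  intro t ht
  rw [hzy t ht]
  have hBint : ∀ a b : ℝ, IntervalIntegrable B MeasureTheory.volume a b :=
    fun a b => hB.intervalIntegrable a b
  have hexp : ∀ s : ℝ, Real.exp (∫ r in t..s, B r) = E s / E t := by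
    intro s
    have : (∫ r in t..s, B r) = (∫ r in (0:ℝ)..s, B r) - ∫ r in (0:ℝ)..t, B r :=
      (intervalIntegral.integral_interval_sub_left (hBint 0 s) (hBint 0 t)).symm
    rw [this, Real.exp_sub]
  have hint : (∫ s in t..T, Real.exp (∫ r in t..s, B r)) = (∫ s in t..T, E s) / E t := by
    rw [← intervalIntegral.integral_div]
    exact intervalIntegral.integral_congr fun s _ => hexp s
  rw [hexp T, hint]
  have hEtne : E t ≠ 0 := (hEpos t).ne'
  have hGne : G t ≠ 0 := (hGpos t ht).ne'
  have hGne' : E T + D * ∫ s in t..T, E s ≠ 0 := by simpa [hG] using hGne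
  simp only [hy, hG]
  have key : E T / E t + D * ((∫ s in t..T, E s) / E t)
      = (E T + D * ∫ s in t..T, E s) / E t := by field_simp
  rw [key, inv_div, ← mul_div_assoc]
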